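/- For p > 0 and any nonnegative integer k, the 2k-th moment of the Ullman distribution equals 4^{-k} · binom(2k, k) · p/(p+2k). -/

import Mathlib

open MeasureTheory

/-- The Ullman density: `ρ(x) = (p|x|^{p-1}/π) ∫_{|x|}^1 y^{-p}/√(1-y²) dy`. -/
noncomputable def ullmanDensity (p x : ℝ) : ℝ :=
  p * |x| ^ (p - 1) / Real.pi * ∫ y in |x|..1, y ^ (-p) / Real.sqrt (1 - y ^ 2)

open Real Set intervalIntegral
open scoped ENNReal


lemma intInt_one_sub (a b : ℝ) :
    IntervalIntegrable (fun y : ℝ => (1 - y) ^ (-(1/2) : ℝ)) volume a b := by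
  simpa using (intervalIntegrable_rpow' (a := 1 - a) (b := 1 - b)
    (by norm_num : (-1:ℝ) < -(1/2))).comp_sub_left 1

lemma meas_g (p : ℝ) : Measurable (fun y : ℝ => y ^ (-p) / Real.sqrt (1 - y ^ 2)) := by
  fun_prop

lemma sqrt_bound {y : ℝ} (hy0 : 0 ≤ y) (hy1 : y ≤ 1) :
    (Real.sqrt (1 - y ^ 2))⁻¹ ≤ (1 - y) ^ (-(1/2) : ℝ) := by
  rcases eq_or_lt_of_le hy1 with rfl | hy1
  · simp
  · have h1 : (0:ℝ) < 1 - y := by linarith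
    have h2 : 1 - y ≤ 1 - y ^ 2 := by nlinarith
    rw [Real.rpow_neg h1.le, ← Real.sqrt_eq_rpow]
    exact inv_anti₀ (Real.sqrt_pos.2 h1) (Real.sqrt_le_sqrt h2)

lemma g_bound (p : ℝ) (hp : 0 < p) {x : ℝ} (hx : 0 < x) {y : ℝ} (hy : y ∈ Set.Ioc x 1) :
    y ^ (-p) / Real.sqrt (1 - y ^ 2) ≤ x ^ (-p) * (1 - y) ^ (-(1/2) : ℝ) := by
  have hy0 : 0 < y := hx.trans hy.1
  have h1 : y ^ (-p) ≤ x ^ (-p) :=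
    Real.rpow_le_rpow_of_nonpos hx hy.1.le (neg_nonpos.2 hp.le)
  calc y ^ (-p) / Real.sqrt (1 - y ^ 2)
      ≤ x ^ (-p) * (Real.sqrt (1 - y ^ 2))⁻¹ := by
        rw [div_eq_mul_inv]
        exact mul_le_mul_of_nonneg_right h1 (by positivity)
    _ ≤ x ^ (-p) * (1 - y) ^ (-(1/2) : ℝ) := by
        refine mul_le_mul_of_nonneg_left ?_ (by positivity)
        rcases eq_or_lt_of_le hy.2 with rfl | h
        · simp
        · exact sqrt_bound hy0.le hy.2

lemma g_intInt (p : ℝ) (hp : 0 < p) {x : ℝ} (hx : 0 < x) (hx1 : x ≤ 1) :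
    IntervalIntegrable (fun y : ℝ => y ^ (-p) / Real.sqrt (1 - y ^ 2)) volume x 1 := by
  refine ((intInt_one_sub x 1).const_mul (x ^ (-p))).mono_fun
    ((meas_g p).aestronglyMeasurable) ?_
  rw [uIoc_of_le hx1]
  refine (ae_restrict_iff' measurableSet_Ioc).2 (Filter.Eventually.of_forall fun y hy => ?_)
  have hy0 : 0 < y := hx.trans hy.1
  have h1 : |y ^ (-p) / Real.sqrt (1 - y ^ 2)| = y ^ (-p) / Real.sqrt (1 - y ^ 2) := by
    rw [abs_of_nonneg]
    exact div_nonneg (Real.rpow_nonneg hy0.le _) (Real.sqrt_nonneg _)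
  have h2 : |x ^ (-p) * (1 - y) ^ (-(1/2) : ℝ)| = x ^ (-p) * (1 - y) ^ (-(1/2) : ℝ) := by
    rw [abs_of_nonneg]
    exact mul_nonneg (Real.rpow_nonneg hx.le _) (Real.rpow_nonneg (by linarith [hy.2]) _)
  simp only [norm_eq_abs, h1, h2]
  exact g_bound p hp hx hy

lemma base_intInt (n : ℕ) :
    IntervalIntegrable (fun y : ℝ => y ^ n / Real.sqrt (1 - y ^ 2)) volume 0 1 := by
  refine (intInt_one_sub 0 1).mono_fun
    (((measurable_id.pow_const n).div
      ((continuous_const.sub (continuous_pow 2)).sqrt.measurable)).aestronglyMeasurable) ?_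
  rw [uIoc_of_le (by norm_num : (0:ℝ) ≤ 1)]
  refine (ae_restrict_iff' measurableSet_Ioc).2 (Filter.Eventually.of_forall fun y hy => ?_)
  have hy0 : 0 < y := hy.1
  have h1 : |y ^ n / Real.sqrt (1 - y ^ 2)| = y ^ n / Real.sqrt (1 - y ^ 2) := by
    rw [abs_of_nonneg]
    exact div_nonneg (pow_nonneg hy0.le _) (Real.sqrt_nonneg _)
  have h2 : |(1 - y) ^ (-(1/2) : ℝ)| = (1 - y) ^ (-(1/2) : ℝ) := by
    rw [abs_of_nonneg]
    exact Real.rpow_nonneg (by linarith [hy.2]) _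
  simp only [norm_eq_abs, h1, h2]
  calc y ^ n / Real.sqrt (1 - y ^ 2) ≤ 1 * (Real.sqrt (1 - y ^ 2))⁻¹ := by
        rw [div_eq_mul_inv]
        exact mul_le_mul_of_nonneg_right (pow_le_one₀ hy0.le hy.2) (by positivity)
    _ ≤ (1 - y) ^ (-(1/2) : ℝ) := by
        rw [one_mul]; exact sqrt_bound hy0.le hy.2


lemma wallis (k : ℕ) :
    ∫ x in (0:ℝ)..1, x ^ (2*k) / Real.sqrt (1 - x ^ 2)
      = Real.pi / 2 * ((Nat.choose (2*k) k : ℝ) / 4 ^ k) := by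
  induction k with
  | zero =>
    have h : ∫ x in (0:ℝ)..1, 1 / Real.sqrt (1 - x ^ 2)
        = Real.arcsin 1 - Real.arcsin 0 := by
      refine integral_eq_sub_of_hasDeriv_right_of_le zero_le_one
        Real.continuous_arcsin.continuousOn (fun x hx => ?_) ?_
      · exact (Real.hasDerivAt_arcsin (by linarith [hx.1]) (ne_of_lt hx.2)).hasDerivWithinAt
      · simpa using base_intInt 0
    simpa using h
  | succ k ih =>
    set I0 := ∫ x in (0:ℝ)..1, x ^ (2*k) / Real.sqrt (1 - x ^ 2) with hI0
    set I1 := ∫ x in (0:ℝ)..1, x ^ (2*(k+1)) / Real.sqrt (1 - x ^ 2) with hI1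
    have key : (2*(k:ℝ)+2) * I1 - (2*k+1) * I0 = 0 := by
      have hu : ∀ x ∈ Set.Ioo (0:ℝ) 1, HasDerivWithinAt
          (fun x : ℝ => -(x ^ (2*k+1) * Real.sqrt (1 - x ^ 2)))
          ((2*(k:ℝ)+2) * (x ^ (2*(k+1)) / Real.sqrt (1 - x ^ 2))
            - (2*(k:ℝ)+1) * (x ^ (2*k) / Real.sqrt (1 - x ^ 2))) (Set.Ioi x) x := by
        intro x hx
        have hx2 : (0:ℝ) < 1 - x ^ 2 := by nlinarith [hx.1, hx.2]
        have hs : Real.sqrt (1 - x ^ 2) ^ 2 = 1 - x ^ 2 := Real.sq_sqrt hx2.le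
        have hspos : 0 < Real.sqrt (1 - x ^ 2) := Real.sqrt_pos.2 hx2
        have h1 : HasDerivAt (fun x : ℝ => Real.sqrt (1 - x ^ 2))
            (1 / (2 * Real.sqrt (1 - x ^ 2)) * (0 - 2 * x ^ 1)) x := by
          exact (Real.hasDerivAt_sqrt hx2.ne').comp x
            ((hasDerivAt_const x (1:ℝ)).sub (hasDerivAt_pow 2 x))
        have h2 : HasDerivAt (fun x : ℝ => x ^ (2*k+1))
            ((2*k+1 : ℕ) * x ^ (2*k)) x := by simpa using hasDerivAt_pow (2*k+1) x
        have h3 : HasDerivWithinAt (fun x : ℝ => -(x ^ (2*k+1) * Real.sqrt (1 - x ^ 2))) _ (Set.Ioi x) x := ((h2.mul h1).neg).hasDerivWithinAt (s := Set.Ioi x)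
        convert h3 using 1
        have hsne := hspos.ne'
        have hs' : Real.sqrt (1 - x ^ 2) * Real.sqrt (1 - x ^ 2) = 1 - x ^ 2 := by
          rw [← sq]; exact hs
        push_cast
        field_simp
        linear_combination (2*(2*(k:ℝ)+1)*x^(2*k)) * hs
      have hcont : ContinuousOn (fun x : ℝ => -(x ^ (2*k+1) * Real.sqrt (1 - x ^ 2)))
          (Set.Icc 0 1) :=
        (((continuous_pow _).mul ((continuous_const.sub (continuous_pow 2)).sqrt)).neg).continuousOn
      have hint : IntervalIntegrable (fun x : ℝ =>
          (2*(k:ℝ)+2) * (x ^ (2*(k+1)) / Real.sqrt (1 - x ^ 2))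
            - (2*(k:ℝ)+1) * (x ^ (2*k) / Real.sqrt (1 - x ^ 2))) volume 0 1 :=
        ((base_intInt _).const_mul _).sub ((base_intInt _).const_mul _)
      have := integral_eq_sub_of_hasDeriv_right_of_le zero_le_one hcont hu hint
      rw [intervalIntegral.integral_sub ((base_intInt _).const_mul _)
        ((base_intInt _).const_mul _), intervalIntegral.integral_const_mul,
        intervalIntegral.integral_const_mul] at this
      simpa using this
    have hc : ((k:ℝ)+1)^2 * (Nat.choose (2*(k+1)) (k+1) : ℝ)
        = (2*k+2)*(2*k+1)*(Nat.choose (2*k) k : ℝ) := by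
      have e1 := Nat.add_one_mul_choose_eq (2*k+1) k
      have e2 := Nat.add_one_mul_choose_eq (2*k) k
      have e3 : Nat.choose (2*k+1) k = Nat.choose (2*k+1) (k+1) := by
        have := Nat.choose_symm (n := 2*k+1) (k := k+1) (by omega)
        simpa [show 2*k+1-(k+1) = k from by omega] using this
      have : (k+1)*(k+1) * Nat.choose (2*(k+1)) (k+1) = (2*k+2)*(2*k+1)*Nat.choose (2*k) k := by
        have e1' : (2*k+2) * Nat.choose (2*k+1) k = Nat.choose (2*k+2) (k+1) * (k+1) := by
          simpa [Nat.succ_eq_add_one] using e1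
        have e2' : (2*k+1) * Nat.choose (2*k) k = Nat.choose (2*k+1) (k+1) * (k+1) := by
          simpa [Nat.succ_eq_add_one] using e2
        calc (k+1)*(k+1) * Nat.choose (2*(k+1)) (k+1)
            = (k+1) * (Nat.choose (2*k+2) (k+1) * (k+1)) := by ring_nf
          _ = (k+1) * ((2*k+2) * Nat.choose (2*k+1) k) := by rw [e1']
          _ = (2*k+2) * ((k+1) * Nat.choose (2*k+1) (k+1)) := by rw [e3]; ring
          _ = (2*k+2) * ((2*k+1) * Nat.choose (2*k) k) := by rw [e2']; ring
          _ = (2*k+2)*(2*k+1)*Nat.choose (2*k) k := by ring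
      have := congrArg (Nat.cast : ℕ → ℝ) this
      push_cast at this ⊢
      linarith [this]
    have h2 : (2*(k:ℝ)+2) ≠ 0 := by positivity
    have hI1v : I1 = (2*(k:ℝ)+1) * I0 / (2*(k:ℝ)+2) := by
      field_simp at key ⊢
      linarith [key]
    have hc' : ((k:ℝ)+1) * (Nat.choose (2*(k+1)) (k+1) : ℝ)
        = 2*(2*(k:ℝ)+1)*(Nat.choose (2*k) k : ℝ) := by
      have hk1 : ((k:ℝ)+1) ≠ 0 := by positivity
      apply mul_left_cancel₀ hk1
      linear_combination hc
    rw [hI1v, ih]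
    have h4 : ((4:ℝ))^(k+1) = 4 * 4^k := by ring
    field_simp [h4]
    linear_combination (-(2*(4:ℝ)^k)) * hc'


lemma core (p : ℝ) (hp : 0 < p) (k : ℕ) :
    (∫ x in Ioo (0:ℝ) 1, x ^ (2*(k:ℝ)+p-1) * ∫ y in Ioo x 1, y ^ (-p) / Real.sqrt (1 - y ^ 2))
      = (1/(p+2*k)) * ∫ y in Ioo (0:ℝ) 1, y ^ (2*k) / Real.sqrt (1 - y ^ 2)
    ∧ IntegrableOn
      (fun x => x ^ (2*(k:ℝ)+p-1) * ∫ y in Ioo x 1, y ^ (-p) / Real.sqrt (1 - y ^ 2))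
      (Ioo (0:ℝ) 1) := by
  set g : ℝ → ℝ := fun y => y ^ (-p) / Real.sqrt (1 - y ^ 2) with hg
  set c : ℝ := 2*(k:ℝ)+p-1 with hc
  have hk0 : (0:ℝ) ≤ 2*(k:ℝ) := by positivity
  have hc1 : c + 1 = p + 2*k := by rw [hc]; ring
  have hcneg1 : (-1:ℝ) < c := by rw [hc]; linarith
  have hpk : (0:ℝ) < p + 2*k := by linarith
  have hgInt : ∀ x : ℝ, x ∈ Ioo (0:ℝ) 1 → IntegrableOn g (Ioo x 1) := by
    intro x hx
    have h := g_intInt p hp hx.1 hx.2.le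
    rw [intervalIntegrable_iff, uIoc_of_le hx.2.le] at h
    exact h.mono_set Ioo_subset_Ioc_self
  have hgnn : ∀ y : ℝ, 0 < y → 0 ≤ g y := fun y hy =>
    div_nonneg (Real.rpow_nonneg hy.le _) (Real.sqrt_nonneg _)
  set H : ℝ → ℝ := fun x => ∫ y in Ioo x 1, g y with hH
  have hHnn : ∀ x : ℝ, 0 < x → 0 ≤ H x := fun x hx =>
    setIntegral_nonneg measurableSet_Ioo (fun y hy => hgnn y (hx.trans hy.1))
  set G : ℝ → ℝ≥0∞ := fun y => ENNReal.ofReal (g y) with hG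
  set Cf : ℝ → ℝ≥0∞ := fun x => ENNReal.ofReal (x ^ c) with hCf
  have hGmeas : Measurable G := (meas_g p).ennreal_ofReal
  have hCmeas : Measurable Cf := by
    have h : Measurable fun x : ℝ => x ^ c := by fun_prop
    exact h.ennreal_ofReal
  set F : ℝ × ℝ → ℝ≥0∞ := fun z => if z.1 < z.2 then Cf z.1 * G z.2 else 0 with hF
  have hFmeas : Measurable F :=
    Measurable.ite (measurableSet_lt measurable_fst measurable_snd)
      ((hCmeas.comp measurable_fst).mul (hGmeas.comp measurable_snd)) measurable_const
  have hHofReal : ∀ x ∈ Ioo (0:ℝ) 1,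
      ENNReal.ofReal (H x) = ∫⁻ y in Ioo x 1, G y := by
    intro x hx
    exact ofReal_integral_eq_lintegral_ofReal (hgInt x hx)
      ((ae_restrict_iff' measurableSet_Ioo).2 (Filter.Eventually.of_forall
        fun y hy => hgnn y (hx.1.trans hy.1)))
  have left_eq : ∫⁻ x in Ioo (0:ℝ) 1, ∫⁻ y in Ioo (0:ℝ) 1, F (x, y)
      = ∫⁻ x in Ioo (0:ℝ) 1, ENNReal.ofReal (x ^ c * H x) := by
    refine setLIntegral_congr_fun measurableSet_Ioo
      (fun x hx => ?_)
    have e1 : ∀ y : ℝ, F (x, y) = (Ioi x).indicator (fun y => Cf x * G y) y := by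
      intro y
      by_cases h : x < y
      · simp [hF, h, Set.indicator_of_mem (mem_Ioi.2 h)]
      · simp [hF, h, Set.indicator_of_notMem (fun hy => h (mem_Ioi.1 hy))]
    have hset : Ioi x ∩ Ioo (0:ℝ) 1 = Ioo x 1 := by
      ext y; simp only [mem_inter_iff, mem_Ioi, mem_Ioo]
      constructor
      · rintro ⟨h1, _, h3⟩; exact ⟨h1, h3⟩
      · rintro ⟨h1, h2⟩; exact ⟨h1, hx.1.trans h1, h2⟩
    calc ∫⁻ y in Ioo (0:ℝ) 1, F (x, y)
        = ∫⁻ y in Ioo (0:ℝ) 1, (Ioi x).indicator (fun y => Cf x * G y) y := by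
          simp_rw [e1]
      _ = ∫⁻ y in Ioi x ∩ Ioo (0:ℝ) 1, Cf x * G y := by
          rw [lintegral_indicator measurableSet_Ioi,
            Measure.restrict_restrict measurableSet_Ioi]
      _ = ∫⁻ y in Ioo x 1, Cf x * G y := by rw [hset]
      _ = Cf x * ∫⁻ y in Ioo x 1, G y := lintegral_const_mul _ hGmeas
      _ = ENNReal.ofReal (x ^ c * H x) := by
          rw [← hHofReal x hx, ← ENNReal.ofReal_mul (Real.rpow_nonneg hx.1.le c)]
  have inner_right : ∀ y ∈ Ioo (0:ℝ) 1,
      ∫⁻ x in Ioo (0:ℝ) 1, F (x, y)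
        = ENNReal.ofReal (1/(p+2*k) * (y ^ (2*k) / Real.sqrt (1 - y ^ 2))) := by
    intro y hy
    have hy0 : 0 < y := hy.1
    have e1 : ∀ x : ℝ, F (x, y) = (Iio y).indicator (fun x => Cf x * G y) x := by
      intro x
      by_cases h : x < y
      · simp [hF, h, Set.indicator_of_mem (mem_Iio.2 h)]
      · simp [hF, h, Set.indicator_of_notMem (fun hx => h (mem_Iio.1 hx))]
    have hset : Iio y ∩ Ioo (0:ℝ) 1 = Ioo 0 y := by
      ext x; simp only [mem_inter_iff, mem_Iio, mem_Ioo]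
      constructor
      · rintro ⟨h1, h2, _⟩; exact ⟨h2, h1⟩
      · rintro ⟨h1, h2⟩; exact ⟨h2, h1, h2.trans hy.2⟩
    have hint : IntegrableOn (fun x : ℝ => x ^ c) (Ioo 0 y) := by
      have h := intervalIntegrable_rpow' (a := 0) (b := y) hcneg1
      rw [intervalIntegrable_iff, uIoc_of_le hy0.le] at h
      exact h.mono_set Ioo_subset_Ioc_self
    have hval : ∫ x in Ioo (0:ℝ) y, x ^ c = y ^ (c+1) / (c+1) := by
      rw [← integral_Ioc_eq_integral_Ioo, ← intervalIntegral.integral_of_le hy0.le,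
        integral_rpow (Or.inl hcneg1),
        Real.zero_rpow (by linarith : c + 1 ≠ 0), sub_zero]
    have hlC : ∫⁻ x in Ioo (0:ℝ) y, Cf x = ENNReal.ofReal (y ^ (c+1) / (c+1)) := by
      rw [← hval]
      exact (ofReal_integral_eq_lintegral_ofReal hint
        ((ae_restrict_iff' measurableSet_Ioo).2 (Filter.Eventually.of_forall
          fun x hx => Real.rpow_nonneg hx.1.le _))).symm
    have hpow : y ^ (c+1) * y ^ (-p) = y ^ (2*k) := by
      rw [← Real.rpow_natCast y (2*k), ← Real.rpow_add hy0]
      congr 1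
      rw [hc1]; push_cast; ring
    have key : y ^ (c+1) / (c+1) * g y
        = 1/(p+2*k) * (y ^ (2*k) / Real.sqrt (1 - y ^ 2)) := by
      have hs0 : Real.sqrt (1 - y ^ 2) ≠ 0 := by
        have h2 : (0:ℝ) < 1 - y ^ 2 := by nlinarith [hy.2]
        positivity
      rw [hg]
      simp only []
      rw [div_mul_div_comm, hpow, hc1]
      field_simp
    calc ∫⁻ x in Ioo (0:ℝ) 1, F (x, y)
        = ∫⁻ x in Ioo (0:ℝ) 1, (Iio y).indicator (fun x => Cf x * G y) x := by
          simp_rw [e1]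
      _ = ∫⁻ x in Iio y ∩ Ioo (0:ℝ) 1, Cf x * G y := by
          rw [lintegral_indicator measurableSet_Iio,
            Measure.restrict_restrict measurableSet_Iio]
      _ = ∫⁻ x in Ioo (0:ℝ) y, Cf x * G y := by rw [hset]
      _ = (∫⁻ x in Ioo (0:ℝ) y, Cf x) * G y := lintegral_mul_const _ hCmeas
      _ = ENNReal.ofReal (y ^ (c+1) / (c+1) * g y) := by
          rw [hlC, ← ENNReal.ofReal_mul (div_nonneg (Real.rpow_nonneg hy0.le _) (by rw [hc1]; linarith))]
      _ = ENNReal.ofReal (1/(p+2*k) * (y ^ (2*k) / Real.sqrt (1 - y ^ 2))) := by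
          rw [key]
  have right_eq : ∫⁻ y in Ioo (0:ℝ) 1, ∫⁻ x in Ioo (0:ℝ) 1, F (x, y)
      = ENNReal.ofReal (1/(p+2*k) * ∫ y in Ioo (0:ℝ) 1, y ^ (2*k) / Real.sqrt (1 - y ^ 2)) := by
    rw [setLIntegral_congr_fun measurableSet_Ioo inner_right]
    have hint : IntegrableOn
        (fun y : ℝ => 1/(p+2*k) * (y ^ (2*k) / Real.sqrt (1 - y ^ 2))) (Ioo 0 1) := by
      have h := (base_intInt (2*k)).const_mul (1/(p+2*k))
      rw [intervalIntegrable_iff, uIoc_of_le zero_le_one] at h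
      exact h.mono_set Ioo_subset_Ioc_self
    rw [← ofReal_integral_eq_lintegral_ofReal hint
      ((ae_restrict_iff' measurableSet_Ioo).2 (Filter.Eventually.of_forall fun y hy =>
        mul_nonneg (by positivity)
          (div_nonneg (pow_nonneg hy.1.le _) (Real.sqrt_nonneg _)))),
      MeasureTheory.integral_const_mul]
  have swap : ∫⁻ x in Ioo (0:ℝ) 1, ∫⁻ y in Ioo (0:ℝ) 1, F (x, y)
      = ∫⁻ y in Ioo (0:ℝ) 1, ∫⁻ x in Ioo (0:ℝ) 1, F (x, y) :=
    lintegral_lintegral_swap hFmeas.aemeasurable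
  have main : ∫⁻ x in Ioo (0:ℝ) 1, ENNReal.ofReal (x ^ c * H x)
      = ENNReal.ofReal (1/(p+2*k) * ∫ y in Ioo (0:ℝ) 1, y ^ (2*k) / Real.sqrt (1 - y ^ 2)) :=
    left_eq ▸ (swap.trans right_eq)
  have hmeasH : AEStronglyMeasurable (fun x => x ^ c * H x)
      (volume.restrict (Ioo (0:ℝ) 1)) := by
    have hmono : Antitone (fun x : ℝ => ∫⁻ y in Ioo x 1, G y) := fun a b hab =>
      lintegral_mono_set (Ioo_subset_Ioo_left hab)
    have hm0 : Measurable fun x : ℝ => x ^ c := by fun_prop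
    have hm1 : Measurable fun x : ℝ => x ^ c * (∫⁻ y in Ioo x 1, G y).toReal :=
      hm0.mul hmono.measurable.ennreal_toReal
    refine hm1.aestronglyMeasurable.congr ?_
    refine (ae_restrict_iff' measurableSet_Ioo).2 (Filter.Eventually.of_forall fun x hx => ?_)
    show x ^ c * (∫⁻ (y : ℝ) in Ioo x 1, G y).toReal = x ^ c * H x
    rw [← hHofReal x hx, ENNReal.toReal_ofReal (hHnn x hx.1)]
  have f_nn : 0 ≤ᵐ[volume.restrict (Ioo (0:ℝ) 1)] fun x => x ^ c * H x :=
    (ae_restrict_iff' measurableSet_Ioo).2 (Filter.Eventually.of_forall fun x hx =>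
      mul_nonneg (Real.rpow_nonneg hx.1.le _) (hHnn x hx.1))
  have Rnn : 0 ≤ 1/(p+2*k) * ∫ y in Ioo (0:ℝ) 1, y ^ (2*k) / Real.sqrt (1 - y ^ 2) :=
    mul_nonneg (by positivity) (setIntegral_nonneg measurableSet_Ioo fun y hy =>
      div_nonneg (pow_nonneg hy.1.le _) (Real.sqrt_nonneg _))
  constructor
  · rw [integral_eq_lintegral_of_nonneg_ae f_nn hmeasH, main, ENNReal.toReal_ofReal Rnn]
  · refine ⟨hmeasH, ?_⟩
    rw [hasFiniteIntegral_iff_ofReal f_nn, main]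
    exact ENNReal.ofReal_lt_top


/-- The `2k`-th moment of the Ullman distribution equals `4^{-k}·C(2k,k)·p/(p+2k)`. -/
theorem stmt1 (p : ℝ) (hp : 0 < p) (k : ℕ) :
    ∫ x in (-1:ℝ)..1, x ^ (2 * k) * ullmanDensity p x
      = (Nat.choose (2 * k) k : ℝ) / 4 ^ k * (p / (p + 2 * k)) := by
  have hpk : (0:ℝ) < p + 2*k := by positivity
  set f : ℝ → ℝ := fun x => x ^ (2 * k) * ullmanDensity p x with hf
  set c : ℝ := 2*(k:ℝ)+p-1 with hc
  set H : ℝ → ℝ := fun x => ∫ y in Ioo x 1, y ^ (-p) / Real.sqrt (1 - y ^ 2) with hH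
  -- pointwise identity on Ioo 0 1
  have hpt : ∀ x ∈ Ioo (0:ℝ) 1, f x = (p/Real.pi) * (x ^ c * H x) := by
    intro x hx
    have hxx : (x:ℝ) ^ (2*k) * x ^ (p-1) = x ^ c := by
      rw [← Real.rpow_natCast x (2*k), ← Real.rpow_add hx.1]
      congr 1
      push_cast; ring
    have habs : |x| = x := abs_of_pos hx.1
    have hiv : (∫ y in x..1, y ^ (-p) / Real.sqrt (1 - y ^ 2)) = H x := by
      rw [intervalIntegral.integral_of_le hx.2.le, integral_Ioc_eq_integral_Ioo]
    show x ^ (2 * k) * ullmanDensity p x = (p/Real.pi) * (x ^ c * H x)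
    unfold ullmanDensity
    rw [habs, hiv, ← hxx]
    ring
  -- set integral over Ioo 0 1
  have hIoo : ∫ x in Ioo (0:ℝ) 1, f x
      = (p/Real.pi) * ((1/(p+2*k)) * ∫ y in Ioo (0:ℝ) 1, y ^ (2*k) / Real.sqrt (1 - y ^ 2)) := by
    rw [setIntegral_congr_fun measurableSet_Ioo hpt, MeasureTheory.integral_const_mul,
      (core p hp k).1]
  have hfInt : IntegrableOn f (Ioo (0:ℝ) 1) := by
    have h1 : IntegrableOn (fun x => (p/Real.pi) * (x ^ c * H x)) (Ioo (0:ℝ) 1) :=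
      ((core p hp k).2.const_mul _)
    refine h1.congr ?_
    exact (ae_restrict_iff' measurableSet_Ioo).2
      (Filter.Eventually.of_forall fun x hx => (hpt x hx).symm)
  have hfInt2 : IntervalIntegrable f volume 0 1 := by
    rw [intervalIntegrable_iff, uIoc_of_le zero_le_one]
    exact (integrableOn_Ioc_iff_integrableOn_Ioo).2 hfInt
  have h01 : ∫ x in (0:ℝ)..1, f x
      = (p/Real.pi) * ((1/(p+2*k)) * ∫ y in Ioo (0:ℝ) 1, y ^ (2*k) / Real.sqrt (1 - y ^ 2)) := by
    rw [intervalIntegral.integral_of_le zero_le_one, integral_Ioc_eq_integral_Ioo, hIoo]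
  -- evenness
  have heven : ∀ x : ℝ, f (-x) = f x := by
    intro x
    have h1 : ullmanDensity p (-x) = ullmanDensity p x := by
      unfold ullmanDensity; rw [abs_neg]
    show (-x) ^ (2*k) * ullmanDensity p (-x) = x ^ (2*k) * ullmanDensity p x
    rw [h1, Even.neg_pow (even_two_mul k)]
  have hneg : IntervalIntegrable f volume (-1) 0 := by
    have h2 : IntervalIntegrable (fun x => f (-x)) volume (-0) (-1) :=
      (IntervalIntegrable.iff_comp_neg (by simp)).mp hfInt2
    simp only [heven, neg_zero] at h2
    exact h2.symm
  have hmirror : ∫ x in (-1:ℝ)..0, f x = ∫ x in (0:ℝ)..1, f x := by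
    have h3 := intervalIntegral.integral_comp_neg (a := (0:ℝ)) (b := 1) f
    simp only [heven, neg_zero] at h3
    rw [← h3]
  have hIval := wallis k
  have hIval' : (∫ y in Ioo (0:ℝ) 1, y ^ (2*k) / Real.sqrt (1 - y ^ 2))
      = Real.pi / 2 * ((Nat.choose (2*k) k : ℝ) / 4 ^ k) := by
    rw [← integral_Ioc_eq_integral_Ioo, ← intervalIntegral.integral_of_le zero_le_one, hIval]
  rw [← intervalIntegral.integral_add_adjacent_intervals hneg hfInt2, hmirror, h01, hIval']
  have hpi := Real.pi_ne_zero
  field_simp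
  ring
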